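/- Let F be a field of characteristic zero and let y₁, y₂, t ∈ F satisfy t³ = (y₁² − 1)(y₂² − 1), with y₂ ≠ 1. Set u = t, X = t³(y₂ + 1)/(y₂ − 1), and Y = 2t³y₁(y₂ + 1)/(y₂ − 1). Then Y² = X³ − 2(u³ − 2)X² + u⁶X. (This is the Weierstrass form of Fibration 6, with singular fibers I₃* + I₁₂ + 3I₁, on the singular K3 surface X₃.) -/

import Mathlib

/-- Weierstrass form of Fibration 6 (singular fibers `I₃* + I₁₂ + 3I₁`) on the
singular K3 surface `X₃` of discriminant 3, as a purely algebraic identity. -/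
theorem fibration6_weierstrass_identity (F : Type*) [Field F] [CharZero F]
    (y₁ y₂ t u X Y : F)
    (ht : t ^ 3 = (y₁ ^ 2 - 1) * (y₂ ^ 2 - 1))
    (hy₂ : y₂ ≠ 1)
    (hu : u = t)
    (hX : X = t ^ 3 * (y₂ + 1) / (y₂ - 1))
    (hY : Y = 2 * t ^ 3 * y₁ * (y₂ + 1) / (y₂ - 1)) :
    Y ^ 2 = X ^ 3 - 2 * (u ^ 3 - 2) * X ^ 2 + u ^ 6 * X := by
  have hd : y₂ - 1 ≠ 0 := sub_ne_zero.mpr hy₂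
  subst hu hX hY
  field_simp
  linear_combination (-4 * u ^ 6 * (y₂ + 1)) * ht
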